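/- Let μ be a probability measure on S, φ : S → ℝ^d with ‖φ(s)‖ ≤ 1 a.s., γ ∈ (0,1), and suppose (s, s') is a pair of random states each marginally distributed as μ. Assume λ_φ := λ_min(E_{s∼μ}[φ(s)φ(s)ᵀ]) > 0. Then for B := E[φ(s)(γφ(s') − φ(s))ᵀ] and every θ ∈ ℝ^d, θᵀBθ ≤ −(1−γ)λ_φ‖θ‖². -/

import Mathlib

open MeasureTheory Matrix

private lemma coord_le_norm {d : ℕ} (x : EuclideanSpace ℝ (Fin d)) (i : Fin d) :
    |x i| ≤ ‖x‖ := by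
  rw [EuclideanSpace.norm_eq]
  have h1 : |x i| = Real.sqrt (‖x i‖ ^ 2) := by
    rw [Real.sqrt_sq_eq_abs]; simp
  rw [h1]
  apply Real.sqrt_le_sqrt
  exact Finset.single_le_sum (f := fun j => ‖x j‖ ^ 2)
    (fun j _ => sq_nonneg _) (Finset.mem_univ i)

theorem stmt_8 {S : Type*} [MeasurableSpace S] (d : ℕ)
    (μ : Measure S) [IsProbabilityMeasure μ]
    (π : Measure (S × S)) [IsProbabilityMeasure π]
    (hfst : π.map Prod.fst = μ) (hsnd : π.map Prod.snd = μ)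
    (φ : S → EuclideanSpace ℝ (Fin d)) (hmeas : Measurable φ)
    (hφ : ∀ᵐ s ∂μ, ‖φ s‖ ≤ 1)
    (γ : ℝ) (hγ0 : 0 < γ) (hγ1 : γ < 1)
    (lamphi : ℝ) (hlam : 0 < lamphi)
    (hmin : ∀ θ : EuclideanSpace ℝ (Fin d),
      lamphi * ‖θ‖ ^ 2 ≤ ∑ i, ∑ j, θ i * (∫ s, φ s i * φ s j ∂μ) * θ j)
    (B : Matrix (Fin d) (Fin d) ℝ)
    (hB : ∀ i j, B i j = ∫ p, φ p.1 i * (γ * φ p.2 j - φ p.1 j) ∂π) :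
    ∀ θ : EuclideanSpace ℝ (Fin d),
      θ ⬝ᵥ B.mulVec θ ≤ -((1 - γ) * lamphi) * ‖θ‖ ^ 2 := by
  intro θ
  set f : S → ℝ := fun s => ∑ i, θ i * φ s i with hf
  have hφi : ∀ i, Measurable fun s => φ s i := fun i => (measurable_pi_apply i).comp ((WithLp.measurable_ofLp 2 _).comp hmeas)
  have hfm : Measurable f := by
    apply Finset.measurable_sum
    intro i _
    exact measurable_const.mul (hφi i)
  -- a.e. bounds
  have hset : MeasurableSet {s : S | ‖φ s‖ ≤ 1} := measurableSet_le hmeas.norm measurable_const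
  have hπ1 : ∀ᵐ p ∂π, ‖φ p.1‖ ≤ 1 := by
    have h := hφ; rw [← hfst] at h
    exact (ae_map_iff measurable_fst.aemeasurable hset).mp h
  have hπ2 : ∀ᵐ p ∂π, ‖φ p.2‖ ≤ 1 := by
    have h := hφ; rw [← hsnd] at h
    exact (ae_map_iff measurable_snd.aemeasurable hset).mp h
  have hfb : ∀ s : S, |f s| ≤ ‖θ‖ * ‖φ s‖ := by
    intro s
    have : f s = inner ℝ θ (φ s) := by
      simp [hf, PiLp.inner_apply, RCLike.inner_apply, mul_comm]
    rw [this]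
    exact abs_real_inner_le_norm θ (φ s)
  -- integrability over μ
  have hμint : ∀ i j, Integrable (fun s => φ s i * φ s j) μ := by
    intro i j
    refine (integrable_const (1 : ℝ)).mono' ((hφi i).mul (hφi j)).aestronglyMeasurable ?_
    filter_upwards [hφ] with s hs
    rw [Real.norm_eq_abs, abs_mul]
    have h1 := (coord_le_norm (φ s) i).trans hs
    have h2 := (coord_le_norm (φ s) j).trans hs
    nlinarith [abs_nonneg (φ s i), abs_nonneg (φ s j)]
  -- I = ∫ f^2 dμ
  set I : ℝ := ∫ s, f s * f s ∂μ with hIdef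
  have hI : lamphi * ‖θ‖ ^ 2 ≤ I := by
    refine (hmin θ).trans_eq ?_
    have expand : ∀ s : S, f s * f s = ∑ i, ∑ j, θ i * (φ s i * φ s j) * θ j := by
      intro s
      rw [hf]
      rw [Finset.sum_mul_sum]
      apply Finset.sum_congr rfl; intro i _
      apply Finset.sum_congr rfl; intro j _
      ring
    rw [hIdef]
    have hint1 : ∀ i : Fin d, Integrable (fun s => ∑ j, θ i * (φ s i * φ s j) * θ j) μ := by
      intro i
      apply integrable_finset_sum
      intro j _
      exact ((hμint i j).const_mul (θ i)).mul_const (θ j)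
    calc ∑ i, ∑ j, θ i * (∫ s, φ s i * φ s j ∂μ) * θ j
        = ∑ i, ∑ j, ∫ s, θ i * (φ s i * φ s j) * θ j ∂μ := by
          apply Finset.sum_congr rfl; intro i _
          apply Finset.sum_congr rfl; intro j _
          rw [MeasureTheory.integral_mul_const, MeasureTheory.integral_const_mul]
      _ = ∫ s, ∑ i, ∑ j, θ i * (φ s i * φ s j) * θ j ∂μ := by
          rw [MeasureTheory.integral_finset_sum]
          · apply Finset.sum_congr rfl; intro i _
            rw [MeasureTheory.integral_finset_sum]
            intro j _
            exact ((hμint i j).const_mul (θ i)).mul_const (θ j)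
          · intro i _
            exact hint1 i
      _ = ∫ s, f s * f s ∂μ := by
          apply integral_congr_ae
          filter_upwards with s
          rw [expand s]
  -- integrability over π of the pairwise products
  have hπint : ∀ i j, Integrable (fun p : S × S => φ p.1 i * (γ * φ p.2 j - φ p.1 j)) π := by
    intro i j
    refine (integrable_const (1 * (γ * 1 + 1) : ℝ)).mono'
      (((hφi i).comp measurable_fst).mul
        ((measurable_const.mul ((hφi j).comp measurable_snd)).sub
          ((hφi j).comp measurable_fst))).aestronglyMeasurable ?_
    filter_upwards [hπ1, hπ2] with p h1 h2
    rw [Real.norm_eq_abs, abs_mul]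
    have a1 := (coord_le_norm (φ p.1) i).trans h1
    have a2 := (coord_le_norm (φ p.2) j).trans h2
    have a3 := (coord_le_norm (φ p.1) j).trans h1
    have habs : |γ * φ p.2 j - φ p.1 j| ≤ γ * 1 + 1 := by
      calc |γ * φ p.2 j - φ p.1 j| ≤ |γ * φ p.2 j| + |φ p.1 j| := abs_sub _ _
        _ ≤ γ * 1 + 1 := by
            rw [abs_mul, abs_of_pos hγ0]
            exact add_le_add (by nlinarith [abs_nonneg (φ p.2 j)]) a3
    nlinarith [abs_nonneg (φ p.1 i), abs_nonneg (γ * φ p.2 j - φ p.1 j)]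
  -- integrability of f-based functions over π
  have hf1m : Measurable fun p : S × S => f p.1 := hfm.comp measurable_fst
  have hf2m : Measurable fun p : S × S => f p.2 := hfm.comp measurable_snd
  have hb1 : ∀ᵐ p ∂π, |f p.1| ≤ ‖θ‖ := by
    filter_upwards [hπ1] with p h1
    calc |f p.1| ≤ ‖θ‖ * ‖φ p.1‖ := hfb p.1
      _ ≤ ‖θ‖ := by nlinarith [norm_nonneg θ, norm_nonneg (φ p.1)]
  have hb2 : ∀ᵐ p ∂π, |f p.2| ≤ ‖θ‖ := by
    filter_upwards [hπ2] with p h2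
    calc |f p.2| ≤ ‖θ‖ * ‖φ p.2‖ := hfb p.2
      _ ≤ ‖θ‖ := by nlinarith [norm_nonneg θ, norm_nonneg (φ p.2)]
  have hA : Integrable (fun p : S × S => f p.1 * f p.1) π := by
    refine (integrable_const (‖θ‖ * ‖θ‖)).mono' (hf1m.mul hf1m).aestronglyMeasurable ?_
    filter_upwards [hb1] with p h1
    rw [Real.norm_eq_abs, abs_mul]
    nlinarith [abs_nonneg (f p.1)]
  have hA2 : Integrable (fun p : S × S => f p.2 * f p.2) π := by
    refine (integrable_const (‖θ‖ * ‖θ‖)).mono' (hf2m.mul hf2m).aestronglyMeasurable ?_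
    filter_upwards [hb2] with p h2
    rw [Real.norm_eq_abs, abs_mul]
    nlinarith [abs_nonneg (f p.2)]
  have hF : Integrable (fun p : S × S => f p.1 * (γ * f p.2 - f p.1)) π := by
    refine (integrable_const (‖θ‖ * (γ * ‖θ‖ + ‖θ‖))).mono'
      (hf1m.mul ((measurable_const.mul hf2m).sub hf1m)).aestronglyMeasurable ?_
    filter_upwards [hb1, hb2] with p h1 h2
    rw [Real.norm_eq_abs, abs_mul]
    have : |γ * f p.2 - f p.1| ≤ γ * ‖θ‖ + ‖θ‖ := by
      calc |γ * f p.2 - f p.1| ≤ |γ * f p.2| + |f p.1| := abs_sub _ _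
        _ ≤ γ * ‖θ‖ + ‖θ‖ := by
            rw [abs_mul, abs_of_pos hγ0]
            exact add_le_add (by nlinarith) h1
    nlinarith [abs_nonneg (f p.1), abs_nonneg (γ * f p.2 - f p.1)]
  -- identification of the quadratic form with an integral
  have hquad : θ ⬝ᵥ B.mulVec θ = ∫ p, f p.1 * (γ * f p.2 - f p.1) ∂π := by
    have expand : ∀ p : S × S, f p.1 * (γ * f p.2 - f p.1)
        = ∑ i, ∑ j, θ i * (φ p.1 i * (γ * φ p.2 j - φ p.1 j)) * θ j := by
      intro p
      simp only [hf]
      rw [Finset.sum_mul]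
      apply Finset.sum_congr rfl; intro i _
      rw [show (γ * ∑ j, θ j * φ p.2 j) - ∑ j, θ j * φ p.1 j
          = ∑ j, (γ * (θ j * φ p.2 j) - θ j * φ p.1 j) from by
        rw [Finset.mul_sum]; exact (Finset.sum_sub_distrib ..).symm]
      rw [Finset.mul_sum]
      apply Finset.sum_congr rfl; intro j _
      ring
    calc θ ⬝ᵥ B.mulVec θ
        = ∑ i, ∑ j, θ i * B i j * θ j := by
          simp [dotProduct, Matrix.mulVec, Finset.mul_sum, mul_assoc]
      _ = ∑ i, ∑ j, ∫ p, θ i * (φ p.1 i * (γ * φ p.2 j - φ p.1 j)) * θ j ∂π := by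
          apply Finset.sum_congr rfl; intro i _
          apply Finset.sum_congr rfl; intro j _
          rw [hB i j, MeasureTheory.integral_mul_const, MeasureTheory.integral_const_mul]
      _ = ∫ p, ∑ i, ∑ j, θ i * (φ p.1 i * (γ * φ p.2 j - φ p.1 j)) * θ j ∂π := by
          rw [MeasureTheory.integral_finset_sum]
          · apply Finset.sum_congr rfl; intro i _
            rw [MeasureTheory.integral_finset_sum]
            intro j _
            exact ((hπint i j).const_mul (θ i)).mul_const (θ j)
          · intro i _
            apply integrable_finset_sum
            intro j _
            exact ((hπint i j).const_mul (θ i)).mul_const (θ j)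
      _ = ∫ p, f p.1 * (γ * f p.2 - f p.1) ∂π := by
          apply integral_congr_ae
          filter_upwards with p
          rw [expand p]
  -- marginal identities
  have hmap1 : ∫ p, f p.1 * f p.1 ∂π = I := by
    rw [hIdef, ← hfst,
      integral_map (f := fun s => f s * f s) measurable_fst.aemeasurable (hfm.mul hfm).aestronglyMeasurable]
  have hmap2 : ∫ p, f p.2 * f p.2 ∂π = I := by
    rw [hIdef, ← hsnd,
      integral_map (f := fun s => f s * f s) measurable_snd.aemeasurable (hfm.mul hfm).aestronglyMeasurable]
  -- main inequality chain
  have hG1 : Integrable (fun p : S × S => (γ / 2) * (f p.1 * f p.1)) π := hA.const_mul _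
  have hG2 : Integrable (fun p : S × S => (γ / 2) * (f p.2 * f p.2)) π := hA2.const_mul _
  have hG12 : Integrable
      (fun p : S × S => (γ / 2) * (f p.1 * f p.1) + (γ / 2) * (f p.2 * f p.2)) π := hG1.add hG2
  have hG : Integrable
      (fun p : S × S => (γ / 2) * (f p.1 * f p.1) + (γ / 2) * (f p.2 * f p.2)
        - f p.1 * f p.1) π := hG12.sub hA
  have hstep : ∫ p, f p.1 * (γ * f p.2 - f p.1) ∂π ≤ (γ - 1) * I := by
    have hmono : ∫ p, f p.1 * (γ * f p.2 - f p.1) ∂π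
        ≤ ∫ p, (γ / 2) * (f p.1 * f p.1) + (γ / 2) * (f p.2 * f p.2) - f p.1 * f p.1 ∂π := by
      apply integral_mono_ae hF hG
      filter_upwards with p
      nlinarith [sq_nonneg (f p.1 - f p.2), hγ0.le]
    refine hmono.trans_eq ?_
    rw [integral_sub hG12 hA, integral_add hG1 hG2,
      MeasureTheory.integral_const_mul, MeasureTheory.integral_const_mul, hmap1, hmap2]
    ring
  rw [hquad]
  refine hstep.trans ?_
  have h := mul_le_mul_of_nonpos_left hI (show γ - 1 ≤ 0 by linarith)
  nlinarith [h]
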